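/- Let $Q_n$ be the $n\times n$ symmetric tridiagonal matrix with entries $(Q_n)_{ii} = p_i + p_{i+1}$, $(Q_n)_{i,i+1} = (Q_n)_{i+1,i} = p_{i+1}$, and zero elsewhere, where $p_1,\dots,p_{n+1}$ are commuting variables (or integers). Then $\det(Q_n) = s_n(p_1,\dots,p_{n+1})$, the $n$-th elementary symmetric polynomial in $p_1,\dots,p_{n+1}$. -/

import Mathlib

/-- The `m`-th elementary symmetric polynomial in the variables `x 0, …, x (N-1)`. -/
def esymm (N m : ℕ) (x : ℕ → ℤ) : ℤ :=
  ∑ t ∈ (Finset.range N).powersetCard m, ∏ j ∈ t, x j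

/-- The symmetric tridiagonal matrix `Q n` with diagonal `p i + p (i+1)` and
off-diagonal entries `p (max i j)` (0-indexed, so `(Q)_{i,i+1} = (Q)_{i+1,i} = p (i+1)`). -/
def Qmat (n : ℕ) (p : ℕ → ℤ) : Matrix (Fin n) (Fin n) ℤ :=
  Matrix.of fun i j =>
    if (i : ℕ) = j then p i + p (i + 1)
    else if (i : ℕ) + 1 = j then p ((i : ℕ) + 1)
    else if (j : ℕ) + 1 = i then p ((j : ℕ) + 1)
    else 0

lemma esymm_step (n : ℕ) (p : ℕ → ℤ) :
    esymm (n + 2) (n + 1) p = ∏ j ∈ Finset.range (n+1), p j + p (n+1) * esymm (n+1) n p := by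
  unfold esymm
  rw [Finset.range_add_one, Finset.powersetCard_succ_insert (Finset.notMem_range_self)]
  rw [Finset.sum_union]
  · have hself : (Finset.range (n+1)).powersetCard (n+1) = {Finset.range (n+1)} := by
      simpa using Finset.powersetCard_self (Finset.range (n+1))
    rw [hself, Finset.sum_singleton, Finset.sum_image, Finset.mul_sum]
    · congr 1
      refine Finset.sum_congr rfl fun t ht => ?_
      rw [Finset.prod_insert]
      intro h
      exact Finset.notMem_range_self ((Finset.mem_powersetCard.mp ht).1 h)
    · intro a ha b hb hab
      have ha' := (Finset.mem_powersetCard.mp ha).1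
      have hb' := (Finset.mem_powersetCard.mp hb).1
      have hna : (n+1) ∉ a := fun h => Finset.notMem_range_self (ha' h)
      have hnb : (n+1) ∉ b := fun h => Finset.notMem_range_self (hb' h)
      rwa [Finset.insert_erase_invOn.2.injOn.eq_iff] at hab <;> simp [hna, hnb]
  · rw [Finset.disjoint_right]
    intro t ht ht'
    obtain ⟨s, hs, rfl⟩ := Finset.mem_image.mp ht
    have := (Finset.mem_powersetCard.mp ht').1
    exact Finset.notMem_range_self (this (Finset.mem_insert_self _ _))

lemma Qmat_apply (n : ℕ) (p : ℕ → ℤ) (i j : Fin n) :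
    Qmat n p i j =
      if (i : ℕ) = j then p i + p (i + 1)
      else if (i : ℕ) + 1 = j then p ((i : ℕ) + 1)
      else if (j : ℕ) + 1 = i then p ((j : ℕ) + 1)
      else 0 := rfl

lemma Qmat_eq_of_coe {m n : ℕ} (p : ℕ → ℤ) {i j : Fin m} {i' j' : Fin n}
    (hi : (i : ℕ) = i') (hj : (j : ℕ) = j') : Qmat m p i j = Qmat n p i' j' := by
  simp [Qmat_apply, hi, hj]

lemma det_Qmat_rec (n : ℕ) (p : ℕ → ℤ) :
    (Qmat (n + 2) p).det =
      (p (n + 1) + p (n + 2)) * (Qmat (n + 1) p).det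
        - p (n + 1) * (p (n + 1) * (Qmat n p).det) := by
  rw [Matrix.det_succ_row _ (Fin.last (n + 1))]
  rw [Fin.sum_univ_castSucc, Fin.sum_univ_castSucc]
  have hz : ∀ j : Fin n, Qmat (n + 2) p (Fin.last (n + 1)) (Fin.castSucc (Fin.castSucc j)) = 0 := by
    intro j
    have hj : (j : ℕ) < n := j.isLt
    simp only [Qmat_apply, Fin.val_last, Fin.coe_castSucc]
    rw [if_neg (by omega), if_neg (by omega), if_neg (by omega)]
  rw [Finset.sum_eq_zero (fun j _ => by rw [hz j]; ring)]
  have h1 : (Qmat (n+2) p) (Fin.last (n+1)) (Fin.last (n+1)) = p (n+1) + p (n+2) := by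
    simp [Qmat_apply]
  have h2 : (Qmat (n+2) p) (Fin.last (n+1)) (Fin.castSucc (Fin.last n)) = p (n+1) := by
    simp only [Qmat_apply, Fin.val_last, Fin.coe_castSucc]
    rw [if_neg (by omega), if_neg (by omega)]
    simp
  have hsub1 : (Qmat (n+2) p).submatrix (Fin.last (n+1)).succAbove (Fin.last (n+1)).succAbove
      = Qmat (n+1) p := by
    ext i j
    exact Qmat_eq_of_coe p (by simp [Fin.succAbove_last]) (by simp [Fin.succAbove_last])
  -- the other submatrix
  have hsub2 : ((Qmat (n+2) p).submatrix (Fin.last (n+1)).succAbove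
      (Fin.castSucc (Fin.last n)).succAbove).det = p (n+1) * (Qmat n p).det := by
    rw [Matrix.det_succ_column _ (Fin.last n)]
    rw [Fin.sum_univ_castSucc]
    have hz2 : ∀ i : Fin n,
        (Qmat (n+2) p).submatrix (Fin.last (n+1)).succAbove
          (Fin.castSucc (Fin.last n)).succAbove (Fin.castSucc i) (Fin.last n) = 0 := by
      intro i
      have hi : (i : ℕ) < n := i.isLt
      have hrow : (((Fin.last (n+1)).succAbove (Fin.castSucc i)) : ℕ) = (i : ℕ) := by
        simp [Fin.succAbove_last]
      have hcol : (((Fin.castSucc (Fin.last n)).succAbove (Fin.last n)) : ℕ) = n + 1 := by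
        simp [Fin.succAbove]
      simp only [Matrix.submatrix_apply, Qmat_apply, hrow, hcol]
      rw [if_neg (by omega), if_neg (by omega), if_neg (by omega)]
    rw [Finset.sum_eq_zero (fun i _ => by rw [hz2 i]; ring)]
    have hrow' : (((Fin.last (n+1)).succAbove (Fin.last n)) : ℕ) = n := by
      simp [Fin.succAbove_last]
    have hcol' : (((Fin.castSucc (Fin.last n)).succAbove (Fin.last n)) : ℕ) = n + 1 := by
      simp [Fin.succAbove]
    have hentry : (Qmat (n+2) p).submatrix (Fin.last (n+1)).succAbove
        (Fin.castSucc (Fin.last n)).succAbove (Fin.last n) (Fin.last n) = p (n+1) := by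
      simp only [Matrix.submatrix_apply, Qmat_apply, hrow', hcol']
      rw [if_neg (by omega)]
      simp
    rw [hentry]
    have hsub3 : ((Qmat (n+2) p).submatrix (Fin.last (n+1)).succAbove
        (Fin.castSucc (Fin.last n)).succAbove).submatrix (Fin.last n).succAbove
        (Fin.last n).succAbove = Qmat n p := by
      ext i j
      refine Qmat_eq_of_coe p ?_ ?_
      · simp [Fin.succAbove_last]
      · show ((Fin.castSucc (Fin.last n)).succAbove ((Fin.last n).succAbove j) : ℕ) = (j : ℕ)
        rw [Fin.succAbove_last]
        rw [Fin.succAbove_of_castSucc_lt _ _ (by simp [Fin.lt_def])]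
        simp
    rw [hsub3]
    simp
  rw [h1, h2, hsub1, hsub2]
  simp [Fin.last]
  ring

lemma esymm_rec (n : ℕ) (p : ℕ → ℤ) :
    esymm (n + 3) (n + 2) p =
      (p (n + 1) + p (n + 2)) * esymm (n + 2) (n + 1) p
        - p (n + 1) * (p (n + 1) * esymm (n + 1) n p) := by
  have h1 := esymm_step (n + 1) p
  have h2 := esymm_step n p
  rw [Finset.prod_range_succ] at h1
  linear_combination h1 - p (n + 1) * h2

/-- `det (Q n) = s_n(p_1, …, p_{n+1})`, the `n`-th elementary symmetric polynomial
in the `n+1` variables `p 0, …, p n`. -/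
theorem det_Qmat_eq_esymm (n : ℕ) (p : ℕ → ℤ) :
    (Qmat n p).det = esymm (n + 1) n p := by
  induction n using Nat.twoStepInduction with
  | zero => simp [esymm]
  | one =>
    rw [Matrix.det_fin_one]
    simp [esymm, Qmat_apply, Finset.powersetCard_one, Finset.range_add_one]
    ring
  | more n ih1 ih2 =>
    rw [det_Qmat_rec, ih1, ih2]
    rw [show n + 2 + 1 = n + 3 from rfl, esymm_rec]
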